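/- Let Ω be a compact Hausdorff space without isolated points (e.g. Ω = [0,1]). Then no extreme point of the closed unit ball of C(Ω)* (real scalars) is a point of weak*-to-weak continuity for the identity map on the unit sphere of C(Ω)*: for each s ∈ Ω there is a sequence sₙ → s with sₙ ≠ s, and the Dirac measures δ_{sₙ} converge weak* to δ_s but do not converge weakly to δ_s in C(Ω)*. -/

import Mathlib

open NormedSpace Filter Topology

/-- On a compact metrizable space without isolated points, for every point `s` there is a
sequence `sₙ ≠ s` converging to `s` such that the Dirac functionals `δ_{sₙ}` converge to
`δ_s` in the weak* topology of `C(Ω)*` but not in the weak topology. -/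
theorem stmt_5 (Ω : Type*) [TopologicalSpace Ω] [CompactSpace Ω] [T2Space Ω]
    [TopologicalSpace.MetrizableSpace Ω]
    (hiso : ∀ x : Ω, (𝓝[≠] x).NeBot) (s : Ω) :
    ∃ u : ℕ → Ω,
      (∀ n, u n ≠ s) ∧
      Tendsto u atTop (𝓝 s) ∧
      -- weak* convergence of `δ_{u n}` to `δ_s`
      (∀ f : C(Ω, ℝ),
        Tendsto (fun n => (ContinuousMap.evalCLM ℝ (u n) : StrongDual ℝ C(Ω, ℝ)) f) atTop
          (𝓝 ((ContinuousMap.evalCLM ℝ s : StrongDual ℝ C(Ω, ℝ)) f))) ∧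
      -- failure of weak convergence: some functional in the bidual does not converge
      ¬ (∀ Λ : StrongDual ℝ (StrongDual ℝ C(Ω, ℝ)),
        Tendsto (fun n => Λ (ContinuousMap.evalCLM ℝ (u n))) atTop
          (𝓝 (Λ (ContinuousMap.evalCLM ℝ s)))) := by
  classical
  letI := TopologicalSpace.metrizableSpaceMetric Ω
  haveI := hiso s
  -- choose a sequence converging to s within {s}ᶜ
  obtain ⟨w, hw⟩ := (𝓝[≠] s).exists_seq_tendsto
  have hne : ∀ᶠ n in atTop, w n ≠ s := hw.eventually self_mem_nhdsWithin
  obtain ⟨N, hN⟩ := hne.exists_forall_of_atTop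
  set u : ℕ → Ω := fun n => w (n + N) with hu_def
  have hu_ne : ∀ n, u n ≠ s := fun n => hN (n + N) (Nat.le_add_left N n)
  have hu_tendsto : Tendsto u atTop (𝓝 s) :=
    ((hw.mono_right nhdsWithin_le_nhds).comp (tendsto_add_atTop_nat N))
  set δ : Ω → StrongDual ℝ C(Ω, ℝ) := fun x => ContinuousMap.evalCLM ℝ x with hδ
  refine ⟨u, hu_ne, hu_tendsto, ?_, ?_⟩
  · intro f
    exact (f.continuous.tendsto s).comp hu_tendsto
  · intro hweak
    -- the closed convex hull of the δ_{u n}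
    set C : Set (StrongDual ℝ C(Ω, ℝ)) :=
      closure (convexHull ℝ (Set.range fun n => δ (u n))) with hC
    -- every element of the convex hull is at distance ≥ 1 from δ s
    have hdist : ∀ μ ∈ convexHull ℝ (Set.range fun n => δ (u n)), 1 ≤ ‖δ s - μ‖ := by
      intro μ hμ
      rw [convexHull_eq] at hμ
      obtain ⟨ι, t, wt, z, hw0, hw1, hz, rfl⟩ := hμ
      -- extract the points
      have hz' : ∀ i, ∃ p : Ω, i ∈ t → (p ≠ s ∧ z i = δ p) := by
        intro i
        by_cases hi : i ∈ t
        · obtain ⟨n, hn⟩ := hz i hi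
          exact ⟨u n, fun _ => ⟨hu_ne n, hn.symm⟩⟩
        · exact ⟨s, fun h => absurd h hi⟩
      choose x hx using hz'
      -- Urysohn function
      have hKclosed : IsClosed (↑(t.image x) : Set Ω) := (t.image x).finite_toSet.isClosed
      have hsK : Disjoint (↑(t.image x) : Set Ω) {s} := by
        rw [Set.disjoint_singleton_right]
        simp only [Finset.coe_image, Set.mem_image, Finset.mem_coe]
        rintro ⟨i, hi, hxi⟩
        exact (hx i hi).1 hxi
      obtain ⟨f, hf0, hf1, hf01⟩ :=
        exists_continuous_zero_one_of_isClosed hKclosed isClosed_singleton hsK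
      set g : C(Ω, ℝ) := (2 : ℝ) • f - 1 with hg
      have hgs : g s = 1 := by
        have := hf1 (Set.mem_singleton s)
        simp only [hg, ContinuousMap.sub_apply, ContinuousMap.smul_apply, ContinuousMap.one_apply]
        rw [show f s = 1 from this]; norm_num
      have hgK : ∀ i ∈ t, g (x i) = -1 := by
        intro i hi
        have hxmem : x i ∈ (↑(t.image x) : Set Ω) := by
          simp only [Finset.coe_image, Set.mem_image, Finset.mem_coe]
          exact ⟨i, hi, rfl⟩
        have := hf0 hxmem
        simp only [hg, ContinuousMap.sub_apply, ContinuousMap.smul_apply, ContinuousMap.one_apply]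
        rw [show f (x i) = 0 from this]; norm_num
      have hgnorm : ‖g‖ ≤ 1 := by
        rw [ContinuousMap.norm_le _ zero_le_one]
        intro y
        have h01 := hf01 y
        simp only [hg, ContinuousMap.sub_apply, ContinuousMap.smul_apply, ContinuousMap.one_apply,
          smul_eq_mul, Real.norm_eq_abs, abs_le]
        constructor <;> nlinarith [h01.1, h01.2]
      -- compute the pairing
      have hcm : t.centerMass wt z = ∑ i ∈ t, wt i • z i := t.centerMass_eq_of_sum_1 z hw1
      have hval : (δ s - t.centerMass wt z) g = 2 := by
        rw [hcm]
        have hsum : (∑ i ∈ t, wt i • z i) g = ∑ i ∈ t, wt i * z i g := by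
          simp [ContinuousLinearMap.sum_apply]
        have hzg : ∀ i ∈ t, z i g = -1 := by
          intro i hi
          rw [(hx i hi).2]
          simpa [hδ] using hgK i hi
        rw [ContinuousLinearMap.sub_apply, hsum,
          Finset.sum_congr rfl (fun i hi => by rw [hzg i hi])]
        have hδsg : δ s g = 1 := by simpa [hδ] using hgs
        rw [hδsg]
        have : ∑ i ∈ t, wt i * (-1 : ℝ) = -1 := by
          rw [← Finset.sum_mul, hw1]; ring
        rw [this]; ring
      have hle : (2 : ℝ) ≤ ‖δ s - t.centerMass wt z‖ := by
        have := (δ s - t.centerMass wt z).le_opNorm g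
        have h2 : |(δ s - t.centerMass wt z) g| = 2 := by rw [hval]; norm_num
        calc (2 : ℝ) = |(δ s - t.centerMass wt z) g| := h2.symm
          _ ≤ ‖δ s - t.centerMass wt z‖ * ‖g‖ := by
              simpa [Real.norm_eq_abs] using this
          _ ≤ ‖δ s - t.centerMass wt z‖ * 1 :=
              mul_le_mul_of_nonneg_left hgnorm (ContinuousLinearMap.opNorm_nonneg _)
          _ = ‖δ s - t.centerMass wt z‖ := mul_one _
      linarith
    -- δ s is not in C
    have hsnotC : δ s ∉ C := by
      intro hmem
      have hsub : C ⊆ {μ | 1 ≤ ‖δ s - μ‖} := by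
        apply closure_minimal hdist
        have : Continuous fun μ : StrongDual ℝ C(Ω, ℝ) => ‖δ s - μ‖ :=
          (continuous_const.sub continuous_id).norm (E := StrongDual ℝ C(Ω, ℝ))
        exact isClosed_le continuous_const this
      have := hsub hmem
      simp only [Set.mem_setOf_eq, sub_self, norm_zero, ContinuousLinearMap.opNorm_zero] at this
      linarith
    -- separation
    obtain ⟨Λ, c, hΛC, hΛs⟩ :=
      geometric_hahn_banach_closed_point
        ((convex_convexHull ℝ _).closure) isClosed_closure hsnotC
    have hmemC : ∀ n, δ (u n) ∈ C :=
      fun n => subset_closure (subset_convexHull ℝ _ ⟨n, rfl⟩)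
    have htend := hweak Λ
    have hle : Λ (δ s) ≤ c :=
      le_of_tendsto htend (Eventually.of_forall fun n => (hΛC _ (hmemC n)).le)
    linarith
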